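/- Let G be a Garside group with Garside monoid G⁺ and let H be a Garside subgroup of G with H⁺ = H ∩ G⁺. If h ∈ H has left normal form h = a⁻¹·b in G (with a, b ∈ G⁺ and a ∧_L b = 1), then a and b lie in H⁺, and a⁻¹·b is also the left normal form of h in H. -/

import Mathlib

namespace Garside

variable {G : Type*} [Group G]

/-- left-divisibility relative to a submonoid P of a group -/
def PLDvd (P : Submonoid G) (a b : G) : Prop := ∃ c ∈ P, b = a * c

/-- right-divisibility relative to a submonoid P of a group -/
def PRDvd (P : Submonoid G) (a b : G) : Prop := ∃ c ∈ P, b = c * a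

/-- A Garside group structure: a group together with a Garside monoid of positive
elements, of which it is the group of fractions. -/
structure GarsideGroup (G : Type*) [Group G] where
  P : Submonoid G
  noeth : ∀ g ∈ P, ∃ N : ℕ, ∀ l : List G,
      (∀ x ∈ l, x ∈ P ∧ x ≠ 1) → l.prod = g → l.length ≤ N
  wedgeL : G → G → G
  wedgeL_mem : ∀ a ∈ P, ∀ b ∈ P, wedgeL a b ∈ P
  wedgeL_dvd_left : ∀ a ∈ P, ∀ b ∈ P, PLDvd P (wedgeL a b) a
  wedgeL_dvd_right : ∀ a ∈ P, ∀ b ∈ P, PLDvd P (wedgeL a b) b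
  le_wedgeL : ∀ a ∈ P, ∀ b ∈ P, ∀ c ∈ P, PLDvd P c a → PLDvd P c b → PLDvd P c (wedgeL a b)
  veeL : G → G → G
  veeL_mem : ∀ a ∈ P, ∀ b ∈ P, veeL a b ∈ P
  dvd_veeL_left : ∀ a ∈ P, ∀ b ∈ P, PLDvd P a (veeL a b)
  dvd_veeL_right : ∀ a ∈ P, ∀ b ∈ P, PLDvd P b (veeL a b)
  veeL_le : ∀ a ∈ P, ∀ b ∈ P, ∀ c ∈ P, PLDvd P a c → PLDvd P b c → PLDvd P (veeL a b) c
  wedgeR : G → G → G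
  wedgeR_mem : ∀ a ∈ P, ∀ b ∈ P, wedgeR a b ∈ P
  wedgeR_dvd_left : ∀ a ∈ P, ∀ b ∈ P, PRDvd P (wedgeR a b) a
  wedgeR_dvd_right : ∀ a ∈ P, ∀ b ∈ P, PRDvd P (wedgeR a b) b
  le_wedgeR : ∀ a ∈ P, ∀ b ∈ P, ∀ c ∈ P, PRDvd P c a → PRDvd P c b → PRDvd P c (wedgeR a b)
  veeR : G → G → G
  veeR_mem : ∀ a ∈ P, ∀ b ∈ P, veeR a b ∈ P
  dvd_veeR_left : ∀ a ∈ P, ∀ b ∈ P, PRDvd P a (veeR a b)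
  dvd_veeR_right : ∀ a ∈ P, ∀ b ∈ P, PRDvd P b (veeR a b)
  veeR_le : ∀ a ∈ P, ∀ b ∈ P, ∀ c ∈ P, PRDvd P a c → PRDvd P b c → PRDvd P (veeR a b) c
  Δ : G
  Δ_mem : Δ ∈ P
  balanced : ∀ g ∈ P, (PLDvd P g Δ ↔ PRDvd P g Δ)
  finD : {g | g ∈ P ∧ PLDvd P g Δ}.Finite
  genP : Submonoid.closure {g | g ∈ P ∧ PLDvd P g Δ} = P
  fractions : ∀ g : G, ∃ a ∈ P, ∃ b ∈ P, g = a⁻¹ * b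
  normal_form : ∀ g : G, ∃! p : G × G, p.1 ∈ P ∧ p.2 ∈ P ∧ g = p.1⁻¹ * p.2 ∧ wedgeL p.1 p.2 = 1

/-- set of minimals (divisors of the Garside element) -/
def DG (𝒢 : GarsideGroup G) : Set G := {g | g ∈ 𝒢.P ∧ PLDvd 𝒢.P g 𝒢.Δ}

/-- Garside subgroup: H ∩ G⁺ is a Garside submonoid and generates H. -/
def IsGarsideSubgroup (𝒢 : GarsideGroup G) (H : Subgroup G) : Prop :=
  (∀ a, a ∈ H → a ∈ 𝒢.P → ∀ b, b ∈ H → b ∈ 𝒢.P →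
      𝒢.wedgeL a b ∈ H ∧ 𝒢.veeL a b ∈ H ∧ 𝒢.wedgeR a b ∈ H ∧ 𝒢.veeR a b ∈ H) ∧
  (∀ h, h ∈ H → h ∈ 𝒢.P → 𝒢.wedgeL h 𝒢.Δ ∈ H ∧ 𝒢.wedgeR h 𝒢.Δ ∈ H) ∧
  Subgroup.closure ((H : Set G) ∩ (𝒢.P : Set G)) = H

/-- atom of the positive monoid -/
def IsAtomP (𝒢 : GarsideGroup G) (s : G) : Prop :=
  s ∈ 𝒢.P ∧ s ≠ 1 ∧ ∀ g ∈ 𝒢.P, ∀ k ∈ 𝒢.P, s = g * k → g = 1 ∨ k = 1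

/-- support: atoms dividing δ -/
def suppP (𝒢 : GarsideGroup G) (δ : G) : Set G := {s | IsAtomP 𝒢 s ∧ PLDvd 𝒢.P s δ}

/-- the subgroup generated by the support of δ -/
def Gδ (𝒢 : GarsideGroup G) (δ : G) : Subgroup G := Subgroup.closure (suppP 𝒢 δ)

/-- balanced element of the positive monoid -/
def BalancedP (𝒢 : GarsideGroup G) (δ : G) : Prop :=
  ∀ g ∈ 𝒢.P, (PLDvd 𝒢.P g δ ↔ PRDvd 𝒢.P g δ)

/-- standard parabolic subgroup condition -/
def IsStdParabolic (𝒢 : GarsideGroup G) (δ : G) : Prop :=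
  δ ∈ DG 𝒢 ∧ BalancedP 𝒢 δ ∧
    {g | g ∈ 𝒢.P ∧ PLDvd 𝒢.P g δ} =
      DG 𝒢 ∩ ((Gδ 𝒢 δ : Set G) ∩ (𝒢.P : Set G))

/-- In the positive monoid, an invertible element is trivial (by noetherianity). -/
lemma eq_one_of_mul_eq_one {G : Type*} [Group G] (𝒢 : GarsideGroup G)
    {c e : G} (hc : c ∈ 𝒢.P) (he : e ∈ 𝒢.P) (hce : c * e = 1) : c = 1 := by
  by_contra hc1
  have he1 : e ≠ 1 := by
    rintro rfl
    exact hc1 (by simpa using hce)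
  obtain ⟨N, hN⟩ := 𝒢.noeth 1 𝒢.P.one_mem
  set l : List G := (List.replicate (N + 1) [c, e]).flatten with hl
  have hmem : ∀ x ∈ l, x ∈ 𝒢.P ∧ x ≠ 1 := by
    intro x hx
    simp only [hl, List.mem_flatten, List.mem_replicate] at hx
    obtain ⟨L, ⟨-, rfl⟩, hxL⟩ := hx
    simp only [List.mem_cons, List.mem_singleton, List.not_mem_nil, or_false] at hxL
    rcases hxL with rfl | rfl
    · exact ⟨hc, hc1⟩
    · exact ⟨he, he1⟩
  have hprod : l.prod = 1 := by
    simp [hl, List.prod_flatten, hce]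
  have hlen := hN l hmem hprod
  have : l.length = (N + 1) * 2 := by
    simp [hl]
  omega

/-- Divisibility of the trivial element forces triviality. -/
lemma eq_one_of_pldvd_one {G : Type*} [Group G] (𝒢 : GarsideGroup G)
    {c : G} (hc : c ∈ 𝒢.P) (hdvd : PLDvd 𝒢.P c 1) : c = 1 := by
  obtain ⟨e, he, heq⟩ := hdvd
  exact eq_one_of_mul_eq_one 𝒢 hc he heq.symm

/-- Every element of a Garside subgroup is a fraction of elements of `H ∩ P`. -/
lemma exists_fraction_in_subgroup {G : Type*} [Group G] (𝒢 : GarsideGroup G)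
    (H : Subgroup G) (hH : IsGarsideSubgroup 𝒢 H) {h : G} (hh : h ∈ H) :
    ∃ p q : G, p ∈ 𝒢.P ∧ p ∈ H ∧ q ∈ 𝒢.P ∧ q ∈ H ∧ h = p⁻¹ * q := by
  set K : Subgroup G :=
    { carrier := {x | ∃ p q : G, p ∈ 𝒢.P ∧ p ∈ H ∧ q ∈ 𝒢.P ∧ q ∈ H ∧ x = p⁻¹ * q}
      one_mem' := ⟨1, 1, 𝒢.P.one_mem, H.one_mem, 𝒢.P.one_mem, H.one_mem, by simp⟩
      mul_mem' := by
        rintro x y ⟨p₁, q₁, hp₁, hp₁H, hq₁, hq₁H, rfl⟩ ⟨p₂, q₂, hp₂, hp₂H, hq₂, hq₂H, rfl⟩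
        obtain ⟨u, hu, humul⟩ := 𝒢.dvd_veeR_left q₁ hq₁ p₂ hp₂
        obtain ⟨v, hv, hvmul⟩ := 𝒢.dvd_veeR_right q₁ hq₁ p₂ hp₂
        have hmH : 𝒢.veeR q₁ p₂ ∈ H := (hH.1 q₁ hq₁H hq₁ p₂ hp₂H hp₂).2.2.2
        have huH : u ∈ H := by
          have : u = 𝒢.veeR q₁ p₂ * q₁⁻¹ := by
            rw [humul]; group
          rw [this]; exact H.mul_mem hmH (H.inv_mem hq₁H)
        have hvH : v ∈ H := by
          have : v = 𝒢.veeR q₁ p₂ * p₂⁻¹ := by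
            rw [hvmul]; group
          rw [this]; exact H.mul_mem hmH (H.inv_mem hp₂H)
        refine ⟨u * p₁, v * q₂, 𝒢.P.mul_mem hu hp₁, H.mul_mem huH hp₁H,
          𝒢.P.mul_mem hv hq₂, H.mul_mem hvH hq₂H, ?_⟩
        have huv : u⁻¹ * v = q₁ * p₂⁻¹ := by
          have : u * q₁ = v * p₂ := by rw [← humul, ← hvmul]
          have := congrArg (fun z => u⁻¹ * z * p₂⁻¹) this
          exact (by simpa [mul_assoc] using this : q₁ * p₂⁻¹ = u⁻¹ * v).symm
        calc p₁⁻¹ * q₁ * (p₂⁻¹ * q₂) = p₁⁻¹ * (u⁻¹ * v) * q₂ := by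
              rw [huv]; group
          _ = (u * p₁)⁻¹ * (v * q₂) := by group
      inv_mem' := by
        rintro x ⟨p, q, hp, hpH, hq, hqH, rfl⟩
        exact ⟨q, p, hq, hqH, hp, hpH, by group⟩ }
  have hsub : ((H : Set G) ∩ (𝒢.P : Set G)) ⊆ (K : Set G) := by
    rintro x ⟨hxH, hxP⟩
    exact ⟨1, x, 𝒢.P.one_mem, H.one_mem, hxP, hxH, by simp⟩
  have hle : Subgroup.closure ((H : Set G) ∩ (𝒢.P : Set G)) ≤ K :=
    (Subgroup.closure_le K).2 hsub
  have : h ∈ Subgroup.closure ((H : Set G) ∩ (𝒢.P : Set G)) := by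
    rw [hH.2.2]; exact hh
  exact hle this

theorem normal_form_in_subgroup {G : Type*} [Group G] (𝒢 : GarsideGroup G)
    (H : Subgroup G) (hH : IsGarsideSubgroup 𝒢 H)
    (h : G) (hh : h ∈ H) (a b : G) (ha : a ∈ 𝒢.P) (hb : b ∈ 𝒢.P)
    (hgcd : 𝒢.wedgeL a b = 1) (hfrac : h = a⁻¹ * b) :
    a ∈ H ∧ b ∈ H ∧
    (∀ c, c ∈ 𝒢.P → c ∈ H →
      (∃ d, d ∈ 𝒢.P ∧ d ∈ H ∧ a = c * d) →
      (∃ d, d ∈ 𝒢.P ∧ d ∈ H ∧ b = c * d) → c = 1) := by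
  obtain ⟨p, q, hp, hpH, hq, hqH, hpq⟩ := exists_fraction_in_subgroup 𝒢 H hH hh
  -- cancel the left gcd z of p and q
  set z := 𝒢.wedgeL p q with hz
  have hzP : z ∈ 𝒢.P := 𝒢.wedgeL_mem p hp q hq
  have hzH : z ∈ H := (hH.1 p hpH hp q hqH hq).1
  obtain ⟨p', hp', hpmul⟩ := 𝒢.wedgeL_dvd_left p hp q hq
  obtain ⟨q', hq', hqmul⟩ := 𝒢.wedgeL_dvd_right p hp q hq
  have hzp : z * p' = p := by rw [hz]; exact hpmul.symm
  have hzq : z * q' = q := by rw [hz]; exact hqmul.symm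
  -- (p', q') is a normal form of h
  have hfrac' : h = p'⁻¹ * q' := by
    rw [hpq, ← hzp, ← hzq]; group
  have hgcd' : 𝒢.wedgeL p' q' = 1 := by
    have hwP : 𝒢.wedgeL p' q' ∈ 𝒢.P := 𝒢.wedgeL_mem p' hp' q' hq'
    have hd1 : PLDvd 𝒢.P (z * 𝒢.wedgeL p' q') p := by
      obtain ⟨e, heP, he⟩ := 𝒢.wedgeL_dvd_left p' hp' q' hq'
      exact ⟨e, heP, by rw [← hzp, mul_assoc, ← he]⟩
    have hd2 : PLDvd 𝒢.P (z * 𝒢.wedgeL p' q') q := by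
      obtain ⟨e, heP, he⟩ := 𝒢.wedgeL_dvd_right p' hp' q' hq'
      exact ⟨e, heP, by rw [← hzq, mul_assoc, ← he]⟩
    have hdz : PLDvd 𝒢.P (z * 𝒢.wedgeL p' q') z :=
      𝒢.le_wedgeL p hp q hq (z * 𝒢.wedgeL p' q') (𝒢.P.mul_mem hzP hwP) hd1 hd2
    obtain ⟨e, heP, he⟩ := hdz
    have hcancel : z * (𝒢.wedgeL p' q' * e) = z * 1 := by
      rw [mul_one, ← mul_assoc, ← he]
    exact eq_one_of_mul_eq_one 𝒢 hwP heP (mul_left_cancel hcancel)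
  -- uniqueness of the normal form: (p', q') = (a, b)
  obtain ⟨w, -, hwuniq⟩ := 𝒢.normal_form h
  have h1 : ((p', q') : G × G) = w := hwuniq (p', q') ⟨hp', hq', hfrac', hgcd'⟩
  have h2 : ((a, b) : G × G) = w := hwuniq (a, b) ⟨ha, hb, hfrac, hgcd⟩
  have hab : p' = a ∧ q' = b := by
    have := h1.trans h2.symm
    exact ⟨congrArg Prod.fst this, congrArg Prod.snd this⟩
  have haH : a ∈ H := by
    have : a = z⁻¹ * p := by rw [← hab.1, ← hzp]; group
    rw [this]; exact H.mul_mem (H.inv_mem hzH) hpH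
  have hbH : b ∈ H := by
    have : b = z⁻¹ * q := by rw [← hab.2, ← hzq]; group
    rw [this]; exact H.mul_mem (H.inv_mem hzH) hqH
  refine ⟨haH, hbH, ?_⟩
  rintro c hcP hcH ⟨d₁, hd₁P, -, hd₁⟩ ⟨d₂, hd₂P, -, hd₂⟩
  have hdvd : PLDvd 𝒢.P c (𝒢.wedgeL a b) :=
    𝒢.le_wedgeL a ha b hb c hcP ⟨d₁, hd₁P, hd₁⟩ ⟨d₂, hd₂P, hd₂⟩
  rw [hgcd] at hdvd
  exact eq_one_of_pldvd_one 𝒢 hcP hdvd
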